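/- arXiv:1704.06640 — 2 statements merged into one kernel-verified Lean document; each statement's English description precedes it below -/
import Mathlib

section
/- Let g_sr and g_rr be independent real random variables on a probability space, with g_sr ~ Gamma(m_sr, θ_sr) and g_rr ~ Gamma(m_rr, θ_rr) for integers m_sr, m_rr ≥ 1 and scales θ_sr, θ_rr > 0. Fix P_s, P_r > 0, C ∈ [0,1], r > 0, set γ = 2^{2r} − 1 and ψ = Ψ_γ(C). Then P[(P_s·g_sr + P_r·g_rr + 1)² − (P_r·g_rr·C)² < 2^{2r}·((P_r·g_rr + 1)² − (P_r·g_rr·C)²)] ≥ 1 − (e^{−ψ/(P_s·θ_sr)} / (Γ(m_rr)·θ_rr^{m_rr})) · Σ_{m=0}^{m_sr−1} Σ_{k=0}^{m} binom(m,k) · P_r^k · Γ(k + m_rr) · (ψ/(P_s·θ_sr))^m / ( m! · (P_r·ψ/(P_s·θ_sr) + 1/θ_rr)^{k + m_rr} ). -/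
open MeasureTheory ProbabilityTheory Real Finset

/-- `Psi γ x = √(1 + γ(1 - x²)) - 1`. -/
noncomputable def Psi (γ x : ℝ) : ℝ := Real.sqrt (1 + γ * (1 - x ^ 2)) - 1

/-- The Gamma(m, θ) law (integer shape `m ≥ 1`, scale `θ > 0`), given by its density
`x^(m-1) e^(-x/θ) / ((m-1)! θ^m)` on `[0, ∞)`. -/
noncomputable def gammaLaw (m : ℕ) (θ : ℝ) : Measure ℝ :=
  volume.withDensity fun x =>
    ENNReal.ofReal
      (if 0 ≤ x then x ^ (m - 1) * Real.exp (-x / θ) / ((Nat.factorial (m - 1) : ℝ) * θ ^ m)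
       else 0)

section aux
open Set Filter
open scoped ENNReal NNReal

lemma aux_hasDerivAt_tail (n : ℕ) {θ : ℝ} (hθ : 0 < θ) (x : ℝ) :
    HasDerivAt (fun t : ℝ => -(Real.exp (-t/θ) * ∑ j ∈ range (n+1), (t/θ)^j / (Nat.factorial j)))
      (x ^ n * Real.exp (-x/θ) / ((Nat.factorial n : ℝ) * θ^(n+1))) x := by
  have hθ' : θ ≠ 0 := hθ.ne'
  have hE : HasDerivAt (fun t : ℝ => Real.exp (-t/θ)) (Real.exp (-x/θ) * (-1/θ)) x := by
    have h1 : HasDerivAt (fun t : ℝ => -t/θ) (-1/θ) x := by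
      simpa using ((hasDerivAt_id x).neg).div_const θ
    exact (Real.hasDerivAt_exp _).comp x h1
  have hS : HasDerivAt (fun t : ℝ => ∑ j ∈ range (n+1), (t/θ)^j / (Nat.factorial j))
      (∑ j ∈ range (n+1), (j : ℝ) * (x/θ)^(j-1) * (1/θ) / (Nat.factorial j)) x := by
    apply HasDerivAt.fun_sum
    intro j _
    exact (((hasDerivAt_id x).div_const θ).pow j).div_const _
  have key : (∑ j ∈ range (n+1), (j : ℝ) * (x/θ)^(j-1) * (1/θ) / (Nat.factorial j))
      = (1/θ) * ∑ j ∈ range n, (x/θ)^j / (Nat.factorial j) := by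
    rw [Finset.sum_range_succ', Finset.mul_sum (range n) (fun j => (x/θ)^j / (Nat.factorial j)) (1/θ)]
    simp only [Nat.cast_zero, zero_mul, add_zero, zero_div, Nat.factorial_zero]
    refine Finset.sum_congr rfl fun i _ => ?_
    have h2 : ((i+1).factorial : ℝ) = (i+1) * (i.factorial : ℝ) := by
      rw [Nat.factorial_succ]; push_cast; ring
    have h3 : ((i:ℝ)+1) ≠ 0 := by positivity
    have h4 : (i.factorial : ℝ) ≠ 0 := by positivity
    rw [h2]
    push_cast
    field_simp
  have := (hE.mul hS).neg
  refine this.congr_deriv ?_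
  rw [key]
  have hsub : ∑ j ∈ range (n+1), (x/θ)^j / (Nat.factorial j)
      - ∑ j ∈ range n, (x/θ)^j / (Nat.factorial j) = (x/θ)^n / (Nat.factorial n) := by
    rw [Finset.sum_range_succ]; ring
  have hx : (x/θ)^n = x^n / θ^n := div_pow x θ n
  have h4 : (n.factorial : ℝ) ≠ 0 := by positivity
  have goal2 : x ^ n * Real.exp (-x/θ) / ((Nat.factorial n : ℝ) * θ^(n+1))
      = -(Real.exp (-x/θ) * (-1/θ) * (∑ j ∈ range (n+1), (x/θ)^j / (Nat.factorial j))
          + Real.exp (-x/θ) * ((1/θ) * ∑ j ∈ range n, (x/θ)^j / (Nat.factorial j))) := by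
    have : -(Real.exp (-x/θ) * (-1/θ) * (∑ j ∈ range (n+1), (x/θ)^j / (Nat.factorial j))
          + Real.exp (-x/θ) * ((1/θ) * ∑ j ∈ range n, (x/θ)^j / (Nat.factorial j)))
        = Real.exp (-x/θ) * (1/θ) * ((∑ j ∈ range (n+1), (x/θ)^j / (Nat.factorial j))
            - ∑ j ∈ range n, (x/θ)^j / (Nat.factorial j)) := by ring
    rw [this, hsub, hx]
    field_simp
    ring
  exact goal2.symm

lemma aux_tendsto_tail (n : ℕ) {θ : ℝ} (hθ : 0 < θ) :
    Tendsto (fun t : ℝ => -(Real.exp (-t/θ) * ∑ j ∈ range (n+1), (t/θ)^j / (Nat.factorial j)))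
      atTop (nhds 0) := by
  have h3 : Tendsto (fun t : ℝ => t/θ) atTop atTop := tendsto_id.atTop_div_const hθ
  have h1 : ∀ j : ℕ, Tendsto (fun t : ℝ => Real.exp (-t/θ) * ((t/θ)^j / (Nat.factorial j)))
      atTop (nhds 0) := by
    intro j
    have h2 := (tendsto_pow_mul_exp_neg_atTop_nhds_zero j).comp h3
    have h4 := h2.div_const (Nat.factorial j : ℝ)
    have heq : (fun t : ℝ => ((fun u : ℝ => u^j * Real.exp (-u)) ∘ (fun t : ℝ => t/θ)) t / (Nat.factorial j : ℝ))
        = fun t : ℝ => Real.exp (-t/θ) * ((t/θ)^j / (Nat.factorial j)) := by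
      funext t
      simp only [Function.comp]
      rw [neg_div]
      ring
    rw [heq] at h4
    simpa using h4
  have h5 : Tendsto (fun t : ℝ => ∑ j ∈ range (n+1), Real.exp (-t/θ) * ((t/θ)^j / (Nat.factorial j)))
      atTop (nhds 0) := by
    have := tendsto_finset_sum (range (n+1)) (fun j _ => h1 j)
    simpa using this
  have heq2 : (fun t : ℝ => -(Real.exp (-t/θ) * ∑ j ∈ range (n+1), (t/θ)^j / (Nat.factorial j)))
      = fun t : ℝ => -(∑ j ∈ range (n+1), Real.exp (-t/θ) * ((t/θ)^j / (Nat.factorial j))) := by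
    funext t
    rw [Finset.mul_sum]
  rw [heq2]
  simpa using h5.neg

lemma aux_tail_integrable (n : ℕ) {θ t : ℝ} (hθ : 0 < θ) (ht : 0 ≤ t) :
    IntegrableOn (fun x : ℝ => x^n * Real.exp (-x/θ) / ((Nat.factorial n : ℝ) * θ^(n+1))) (Ioi t) := by
  refine integrableOn_Ioi_deriv_of_nonneg' (fun x _ => aux_hasDerivAt_tail n hθ x) ?_ (aux_tendsto_tail n hθ)
  intro x hx
  have hx0 : (0:ℝ) ≤ x := le_of_lt (lt_of_le_of_lt ht hx)
  have : (0:ℝ) < (Nat.factorial n : ℝ) * θ^(n+1) := by positivity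
  exact div_nonneg (mul_nonneg (pow_nonneg hx0 n) (Real.exp_nonneg _)) this.le

lemma aux_tail_int (n : ℕ) {θ t : ℝ} (hθ : 0 < θ) (ht : 0 ≤ t) :
    ∫ x in Ioi t, x^n * Real.exp (-x/θ) / ((Nat.factorial n : ℝ) * θ^(n+1))
      = Real.exp (-t/θ) * ∑ j ∈ range (n+1), (t/θ)^j / (Nat.factorial j) := by
  have h := integral_Ioi_of_hasDerivAt_of_nonneg' (fun x _ => aux_hasDerivAt_tail n hθ x)
    (fun x hx => by
      have hx0 : (0:ℝ) ≤ x := le_of_lt (lt_of_le_of_lt ht hx)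
      have : (0:ℝ) < (Nat.factorial n : ℝ) * θ^(n+1) := by positivity
      exact div_nonneg (mul_nonneg (pow_nonneg hx0 n) (Real.exp_nonneg _)) this.le)
    (aux_tendsto_tail n hθ)
  simpa using h

lemma aux_integrable_pow_exp (n : ℕ) {β : ℝ} (hβ : 0 < β) :
    IntegrableOn (fun y : ℝ => y^n * Real.exp (-(β*y))) (Ioi (0:ℝ)) := by
  have h := (aux_tail_integrable n (θ := 1/β) (by positivity) le_rfl).const_mul
    ((Nat.factorial n : ℝ) * (1/β)^(n+1))
  have hc : ((Nat.factorial n : ℝ) * (1/β)^(n+1)) ≠ 0 := by positivity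
  have heq : (fun x : ℝ => ((Nat.factorial n : ℝ) * (1/β)^(n+1)) *
        (x^n * Real.exp (-x/(1/β)) / ((Nat.factorial n : ℝ) * (1/β)^(n+1))))
      = fun y : ℝ => y^n * Real.exp (-(β*y)) := by
    funext y
    have harg : -y/(1/β) = -(β*y) := by field_simp
    rw [harg]
    field_simp
  rwa [heq] at h

lemma aux_integral_pow_exp (n : ℕ) {β : ℝ} (hβ : 0 < β) :
    ∫ y in Ioi (0:ℝ), y^n * Real.exp (-(β*y)) = (Nat.factorial n : ℝ) / β^(n+1) := by
  have h := aux_tail_int n (θ := 1/β) (t := 0) (by positivity) le_rfl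
  have hsum : ∑ j ∈ range (n+1), ((0:ℝ)/(1/β))^j / (Nat.factorial j) = 1 := by
    rw [Finset.sum_eq_single 0]
    · norm_num
    · intro j _ hj
      rw [zero_div, zero_pow hj, zero_div]
    · intro h'
      exact absurd (Finset.mem_range.2 n.succ_pos) h'
  rw [hsum] at h
  simp only [neg_zero, zero_div, Real.exp_zero, mul_one] at h
  have heq : (fun x : ℝ => x^n * Real.exp (-x/(1/β)) / ((Nat.factorial n : ℝ) * (1/β)^(n+1)))
      = fun x : ℝ => x^n * Real.exp (-(β*x)) / ((Nat.factorial n : ℝ) * (1/β)^(n+1)) := by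
    funext x
    have harg : -x/(1/β) = -(β*x) := by field_simp
    rw [harg]
  have hc : ((Nat.factorial n : ℝ) * (1/β)^(n+1)) ≠ 0 := by positivity
  rw [heq, integral_div, div_eq_one_iff_eq hc] at h
  rw [h]
  field_simp
  rw [← mul_pow, one_div_mul_cancel hβ.ne', one_pow]

lemma aux_gammaLaw_neg (m : ℕ) (θ : ℝ) : gammaLaw m θ (Set.Iio 0) = 0 := by
  rw [gammaLaw, withDensity_apply _ measurableSet_Iio]
  have hstep : ∀ᵐ x ∂volume, x ∈ Set.Iio (0:ℝ) →
      ENNReal.ofReal (if 0 ≤ x then x ^ (m - 1) * Real.exp (-x / θ) /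
          ((Nat.factorial (m - 1) : ℝ) * θ ^ m) else 0) = (fun _ => (0:ℝ≥0∞)) x := by
    refine ae_of_all _ (fun x hx => ?_)
    rw [if_neg (not_le.2 hx), ENNReal.ofReal_zero]
  rw [setLIntegral_congr_fun_ae measurableSet_Iio hstep]
  simp

lemma aux_gammaLaw_Ici {m : ℕ} (hm : 1 ≤ m) {θ t : ℝ} (hθ : 0 < θ) (ht : 0 ≤ t) :
    gammaLaw m θ (Set.Ici t)
      = ENNReal.ofReal (Real.exp (-t/θ) * ∑ j ∈ range m, (t/θ)^j / (Nat.factorial j)) := by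
  obtain ⟨n, rfl⟩ : ∃ n, m = n + 1 := ⟨m-1, (Nat.succ_pred_eq_of_pos hm).symm⟩
  rw [gammaLaw, withDensity_apply _ measurableSet_Ici, ← restrict_Ioi_eq_restrict_Ici]
  have hstep : ∀ᵐ x ∂volume, x ∈ Set.Ioi t →
      ENNReal.ofReal (if 0 ≤ x then x ^ (n + 1 - 1) * Real.exp (-x / θ) /
          ((Nat.factorial (n + 1 - 1) : ℝ) * θ ^ (n+1)) else 0)
        = (fun x => ENNReal.ofReal (x ^ n * Real.exp (-x / θ) /
            ((Nat.factorial n : ℝ) * θ ^ (n+1)))) x := by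
    refine ae_of_all _ (fun x hx => ?_)
    rw [if_pos (le_of_lt (lt_of_le_of_lt ht hx))]
    norm_num
  rw [setLIntegral_congr_fun_ae measurableSet_Ioi hstep]
  rw [← ofReal_integral_eq_lintegral_ofReal (aux_tail_integrable n hθ ht)
    ((ae_restrict_iff' measurableSet_Ioi).2 (ae_of_all _ (fun x hx => by
      have hx0 : (0:ℝ) ≤ x := le_of_lt (lt_of_le_of_lt ht hx)
      have hpos : (0:ℝ) < (Nat.factorial n : ℝ) * θ^(n+1) := by positivity
      exact div_nonneg (mul_nonneg (pow_nonneg hx0 n) (Real.exp_nonneg _)) hpos.le)))]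
  rw [aux_tail_int n hθ ht]

lemma aux_expand (nrr msr : ℕ) (θrr Pr L y : ℝ) (hθrr : θrr ≠ 0) :
    (y^nrr * Real.exp (-y/θrr) / ((Nat.factorial nrr : ℝ) * θrr^(nrr+1))) *
      (Real.exp (-(L*(Pr*y+1))) * ∑ m ∈ range msr, (L*(Pr*y+1))^m / (Nat.factorial m : ℝ))
    = ∑ m ∈ range msr, ∑ k ∈ range (m+1),
        (Real.exp (-L) * (Nat.choose m k : ℝ) * Pr^k * L^m /
          ((Nat.factorial m : ℝ) * ((Nat.factorial nrr : ℝ) * θrr^(nrr+1))))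
          * (y^(k+nrr) * Real.exp (-((Pr*L + 1/θrr) * y))) := by
  have hexp : Real.exp (-y/θrr) * Real.exp (-(L*(Pr*y+1)))
      = Real.exp (-L) * Real.exp (-((Pr*L + 1/θrr)*y)) := by
    rw [← Real.exp_add, ← Real.exp_add]
    congr 1
    field_simp
    ring
  rw [Finset.mul_sum, Finset.mul_sum]
  refine Finset.sum_congr rfl fun m _ => ?_
  rw [mul_pow, add_pow]
  simp only [Finset.mul_sum, Finset.sum_div]
  refine Finset.sum_congr rfl fun k _ => ?_
  have h1 : (1:ℝ)^(m-k) = 1 := one_pow _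
  linear_combination (y^nrr * y^k * Pr^k * L^m * (Nat.choose m k : ℝ) /
    ((Nat.factorial m : ℝ) * ((Nat.factorial nrr : ℝ) * θrr^(nrr+1)))) * hexp


end aux

set_option maxHeartbeats 1000000

theorem stmt_1
    {Ω : Type*} [MeasurableSpace Ω] (μ : Measure Ω) [IsProbabilityMeasure μ]
    (g_sr g_rr : Ω → ℝ) (hg_sr : Measurable g_sr) (hg_rr : Measurable g_rr)
    (hindep : IndepFun g_sr g_rr μ)
    (m_sr m_rr : ℕ) (hm_sr : 1 ≤ m_sr) (hm_rr : 1 ≤ m_rr)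
    (θ_sr θ_rr : ℝ) (hθ_sr : 0 < θ_sr) (hθ_rr : 0 < θ_rr)
    (hlaw_sr : μ.map g_sr = gammaLaw m_sr θ_sr)
    (hlaw_rr : μ.map g_rr = gammaLaw m_rr θ_rr)
    (P_s P_r : ℝ) (hP_s : 0 < P_s) (hP_r : 0 < P_r)
    (C : ℝ) (hC : C ∈ Set.Icc (0 : ℝ) 1)
    (r : ℝ) (hr : 0 < r)
    (γ ψ : ℝ) (hγ : γ = (2 : ℝ) ^ (2 * r) - 1) (hψ : ψ = Psi γ C) :
    (μ {ω | (P_s * g_sr ω + P_r * g_rr ω + 1) ^ 2 - (P_r * g_rr ω * C) ^ 2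
          < (2 : ℝ) ^ (2 * r) * ((P_r * g_rr ω + 1) ^ 2 - (P_r * g_rr ω * C) ^ 2)}).toReal
      ≥ 1 - (Real.exp (-ψ / (P_s * θ_sr)) / (Real.Gamma (m_rr : ℝ) * θ_rr ^ m_rr)) *
          ∑ m ∈ range m_sr, ∑ k ∈ range (m + 1),
            (m.choose k : ℝ) * P_r ^ k * Real.Gamma ((k : ℝ) + m_rr) *
              (ψ / (P_s * θ_sr)) ^ m /
              ((Nat.factorial m : ℝ) *
                (P_r * ψ / (P_s * θ_sr) + 1 / θ_rr) ^ (k + m_rr)) := by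
  obtain ⟨nrr, rfl⟩ : ∃ n, m_rr = n + 1 := ⟨m_rr - 1, (Nat.succ_pred_eq_of_pos hm_rr).symm⟩
  -- basic positivity facts
  have hγ0 : 0 < γ := by
    have h : (1:ℝ) < (2:ℝ) ^ (2 * r) :=
      (Real.one_lt_rpow_iff_of_pos (by norm_num)).2 (Or.inl ⟨one_lt_two, by linarith⟩)
    rw [hγ]; linarith
  have hK : (2:ℝ) ^ (2 * r) = 1 + γ := by rw [hγ]; ring
  have hC2 : C ^ 2 ≤ 1 := by nlinarith [hC.1, hC.2]
  have hv1 : (1:ℝ) ≤ 1 + γ * (1 - C ^ 2) := by nlinarith [hγ0]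
  have hψ1 : ψ + 1 = Real.sqrt (1 + γ * (1 - C ^ 2)) := by rw [hψ, Psi]; ring
  have hψ0 : 0 ≤ ψ := by
    have h := Real.sqrt_le_sqrt hv1
    rw [Real.sqrt_one] at h
    linarith
  have hψsq : (ψ + 1) ^ 2 = 1 + γ * (1 - C ^ 2) := by
    rw [hψ1]; exact Real.sq_sqrt (by linarith)
  obtain ⟨L, hLdef⟩ : ∃ L : ℝ, L = ψ / (P_s * θ_sr) := ⟨_, rfl⟩
  have hL0 : 0 ≤ L := hLdef ▸ div_nonneg hψ0 (by positivity)
  obtain ⟨β, hβdef⟩ : ∃ b : ℝ, b = P_r * L + 1 / θ_rr := ⟨_, rfl⟩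
  have hβ0 : 0 < β := by
    rw [hβdef]
    have hh1 : 0 ≤ P_r * L := mul_nonneg hP_r.le hL0
    have hh2 : 0 < 1 / θ_rr := by positivity
    linarith
  simp only [← hLdef]
  -- probability instances
  haveI hPM1 : IsProbabilityMeasure (gammaLaw m_sr θ_sr) := by
    rw [← hlaw_sr]; exact Measure.isProbabilityMeasure_map hg_sr.aemeasurable
  haveI hPM2 : IsProbabilityMeasure (gammaLaw (nrr + 1) θ_rr) := by
    rw [← hlaw_rr]; exact Measure.isProbabilityMeasure_map hg_rr.aemeasurable
  -- a.e. nonnegativity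
  have h_sr_nn : ∀ᵐ ω ∂μ, 0 ≤ g_sr ω := by
    rw [ae_iff]
    have h0 : {ω | ¬ 0 ≤ g_sr ω} = g_sr ⁻¹' (Set.Iio 0) := by ext ω; simp [not_le]
    rw [h0, ← Measure.map_apply hg_sr measurableSet_Iio, hlaw_sr]
    exact aux_gammaLaw_neg _ _
  have h_rr_nn : ∀ᵐ ω ∂μ, 0 ≤ g_rr ω := by
    rw [ae_iff]
    have h0 : {ω | ¬ 0 ≤ g_rr ω} = g_rr ⁻¹' (Set.Iio 0) := by ext ω; simp [not_le]
    rw [h0, ← Measure.map_apply hg_rr measurableSet_Iio, hlaw_rr]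
    exact aux_gammaLaw_neg _ _
  have h_rr_law_nn : ∀ᵐ y ∂(gammaLaw (nrr + 1) θ_rr), 0 ≤ y := by
    rw [ae_iff]
    have h0 : {y : ℝ | ¬ 0 ≤ y} = Set.Iio 0 := by ext y; simp [not_le]
    rw [h0]
    exact aux_gammaLaw_neg _ _
  -- the event inclusion
  have hsubset : {ω | P_s * g_sr ω < ψ * (P_r * g_rr ω + 1)} ≤ᵐ[μ]
      {ω | (P_s * g_sr ω + P_r * g_rr ω + 1) ^ 2 - (P_r * g_rr ω * C) ^ 2
          < (2 : ℝ) ^ (2 * r) * ((P_r * g_rr ω + 1) ^ 2 - (P_r * g_rr ω * C) ^ 2)} := by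
    filter_upwards [h_sr_nn, h_rr_nn] with ω h1 h2 h3
    have h3' : P_s * g_sr ω < ψ * (P_r * g_rr ω + 1) := h3
    show (P_s * g_sr ω + P_r * g_rr ω + 1) ^ 2 - (P_r * g_rr ω * C) ^ 2
        < (2 : ℝ) ^ (2 * r) * ((P_r * g_rr ω + 1) ^ 2 - (P_r * g_rr ω * C) ^ 2)
    rw [hK]
    have ha : 0 ≤ P_s * g_sr ω := mul_nonneg hP_s.le h1
    have hb : 0 ≤ P_r * g_rr ω := mul_nonneg hP_r.le h2
    have h5 : P_s * g_sr ω + P_r * g_rr ω + 1 < (1 + ψ) * (P_r * g_rr ω + 1) := by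
      nlinarith [h3']
    have h6 := mul_self_lt_mul_self
      (by linarith : (0:ℝ) ≤ P_s * g_sr ω + P_r * g_rr ω + 1) h5
    have h7 : ((1 + ψ) * (P_r * g_rr ω + 1)) * ((1 + ψ) * (P_r * g_rr ω + 1))
        = (1 + γ * (1 - C ^ 2)) * (P_r * g_rr ω + 1) ^ 2 := by
      linear_combination ((P_r * g_rr ω + 1) ^ 2) * hψsq
    rw [h7] at h6
    nlinarith [h6, mul_nonneg (mul_nonneg hγ0.le (sq_nonneg C))
      (show (0:ℝ) ≤ 2 * (P_r * g_rr ω) + 1 by linarith)]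
  -- names for the key quantities
  have hNmeas : MeasurableSet {ω | ψ * (P_r * g_rr ω + 1) ≤ P_s * g_sr ω} :=
    measurableSet_le (by fun_prop) (by fun_prop)
  set T : ℝ → ℝ := fun y => Real.exp (-(ψ * (P_r * y + 1) / P_s) / θ_sr) *
      ∑ j ∈ range m_sr, ((ψ * (P_r * y + 1) / P_s) / θ_sr) ^ j / (Nat.factorial j : ℝ) with hTdef
  set W : ℝ → ℝ := fun y => ∑ m ∈ range m_sr, ∑ k ∈ range (m + 1),
      (Real.exp (-L) * (Nat.choose m k : ℝ) * P_r ^ k * L ^ m /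
        ((Nat.factorial m : ℝ) * ((Nat.factorial nrr : ℝ) * θ_rr ^ (nrr + 1)))) *
        (y ^ (k + nrr) * Real.exp (-(β * y))) with hWdef
  have hmap : μ.map (fun ω => (g_sr ω, g_rr ω))
      = (gammaLaw m_sr θ_sr).prod (gammaLaw (nrr + 1) θ_rr) := by
    rw [← hlaw_sr, ← hlaw_rr]
    exact (indepFun_iff_map_prod_eq_prod_map_map hg_sr.aemeasurable hg_rr.aemeasurable).1 hindep
  have hSmeas : MeasurableSet {p : ℝ × ℝ | ψ * (P_r * p.2 + 1) ≤ P_s * p.1} :=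
    measurableSet_le (by fun_prop) (by fun_prop)
  have hN1 : μ {ω | ψ * (P_r * g_rr ω + 1) ≤ P_s * g_sr ω}
      = ((gammaLaw m_sr θ_sr).prod (gammaLaw (nrr + 1) θ_rr))
          {p : ℝ × ℝ | ψ * (P_r * p.2 + 1) ≤ P_s * p.1} := by
    rw [← hmap, Measure.map_apply (hg_sr.prodMk hg_rr) hSmeas]
    rfl
  have hN2 : ((gammaLaw m_sr θ_sr).prod (gammaLaw (nrr + 1) θ_rr))
          {p : ℝ × ℝ | ψ * (P_r * p.2 + 1) ≤ P_s * p.1}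
      = ∫⁻ y, gammaLaw m_sr θ_sr (Set.Ici (ψ * (P_r * y + 1) / P_s))
          ∂(gammaLaw (nrr + 1) θ_rr) := by
    rw [Measure.prod_apply_symm hSmeas]
    refine lintegral_congr fun y => ?_
    congr 1
    ext x
    simp only [Set.mem_preimage, Set.mem_setOf_eq, Set.mem_Ici]
    rw [div_le_iff₀ hP_s, mul_comm x P_s]
  have hN3 : (∫⁻ y, gammaLaw m_sr θ_sr (Set.Ici (ψ * (P_r * y + 1) / P_s))
          ∂(gammaLaw (nrr + 1) θ_rr))
      = ∫⁻ y, ENNReal.ofReal (T y) ∂(gammaLaw (nrr + 1) θ_rr) := by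
    refine lintegral_congr_ae (h_rr_law_nn.mono fun y hy => ?_)
    show (gammaLaw m_sr θ_sr) (Set.Ici (ψ * (P_r * y + 1) / P_s)) = ENNReal.ofReal (T y)
    have harg0 : 0 ≤ ψ * (P_r * y + 1) / P_s :=
      div_nonneg (mul_nonneg hψ0 (by nlinarith [mul_nonneg hP_r.le hy])) hP_s.le
    rw [aux_gammaLaw_Ici hm_sr hθ_sr harg0]
  have hpdfmeas : Measurable (fun y : ℝ => ENNReal.ofReal
      (if 0 ≤ y then y ^ ((nrr+1) - 1) * Real.exp (-y / θ_rr) /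
        ((Nat.factorial ((nrr+1) - 1) : ℝ) * θ_rr ^ (nrr+1)) else 0)) := by
    refine Measurable.ennreal_ofReal ?_
    refine Measurable.ite (measurableSet_le measurable_const measurable_id) ?_ measurable_const
    fun_prop
  have hTmeas : Measurable fun y : ℝ => ENNReal.ofReal (T y) := by
    refine Measurable.ennreal_ofReal ?_
    rw [hTdef]
    refine Measurable.mul (by fun_prop) ?_
    exact Finset.measurable_sum _ fun j _ => by fun_prop
  have hN4 : (∫⁻ y, ENNReal.ofReal (T y) ∂(gammaLaw (nrr + 1) θ_rr))
      = ∫⁻ y, ENNReal.ofReal ((if 0 ≤ y then y ^ ((nrr+1) - 1) * Real.exp (-y / θ_rr) /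
        ((Nat.factorial ((nrr+1) - 1) : ℝ) * θ_rr ^ (nrr+1)) else 0) * T y) ∂volume := by
    rw [gammaLaw, lintegral_withDensity_eq_lintegral_mul volume hpdfmeas hTmeas]
    refine lintegral_congr fun y => ?_
    simp only [Pi.mul_apply]
    have hnn : 0 ≤ (if 0 ≤ y then y ^ ((nrr+1) - 1) * Real.exp (-y / θ_rr) /
        ((Nat.factorial ((nrr+1) - 1) : ℝ) * θ_rr ^ (nrr+1)) else 0) := by
      rcases le_or_gt 0 y with hy | hy
      · rw [if_pos hy]
        exact div_nonneg (mul_nonneg (pow_nonneg hy _) (Real.exp_nonneg _)) (by positivity)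
      · rw [if_neg (not_le.2 hy)]
    rw [← ENNReal.ofReal_mul hnn]
  have hWT : ∀ y : ℝ, (y ^ ((nrr+1) - 1) * Real.exp (-y / θ_rr) /
      ((Nat.factorial ((nrr+1) - 1) : ℝ) * θ_rr ^ (nrr+1))) * T y = W y := by
    intro y
    have h1 : ψ * (P_r * y + 1) / P_s / θ_sr = L * (P_r * y + 1) := by
      rw [hLdef]; field_simp; try ring
    have h2 : T y = Real.exp (-(L * (P_r * y + 1))) *
        ∑ m ∈ range m_sr, (L * (P_r * y + 1)) ^ m / (Nat.factorial m : ℝ) := by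
      simp only [hTdef]
      rw [neg_div, h1]
    rw [h2]
    simp only [Nat.add_sub_cancel, hWdef, hβdef]
    exact aux_expand nrr m_sr θ_rr P_r L y hθ_rr.ne'
  have hN6 : (∫⁻ y, ENNReal.ofReal ((if 0 ≤ y then y ^ ((nrr+1) - 1) * Real.exp (-y / θ_rr) /
        ((Nat.factorial ((nrr+1) - 1) : ℝ) * θ_rr ^ (nrr+1)) else 0) * T y) ∂volume)
      = ∫⁻ y in Set.Ioi (0:ℝ), ENNReal.ofReal (W y) ∂volume := by
    rw [← lintegral_add_compl (fun y => ENNReal.ofReal ((if 0 ≤ y then y ^ ((nrr+1) - 1) * Real.exp (-y / θ_rr) /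
        ((Nat.factorial ((nrr+1) - 1) : ℝ) * θ_rr ^ (nrr+1)) else 0) * T y))
      measurableSet_Iio (μ := volume)]
    have hzero : (∫⁻ y in Set.Iio (0:ℝ), ENNReal.ofReal ((if 0 ≤ y then y ^ ((nrr+1) - 1) * Real.exp (-y / θ_rr) /
        ((Nat.factorial ((nrr+1) - 1) : ℝ) * θ_rr ^ (nrr+1)) else 0) * T y) ∂volume) = 0 := by
      have hstep : ∀ᵐ y ∂volume, y ∈ Set.Iio (0:ℝ) →
          ENNReal.ofReal ((if 0 ≤ y then y ^ ((nrr+1) - 1) * Real.exp (-y / θ_rr) /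
        ((Nat.factorial ((nrr+1) - 1) : ℝ) * θ_rr ^ (nrr+1)) else 0) * T y) = (fun _ => (0 : ENNReal)) y :=
        ae_of_all _ fun y hy => by rw [if_neg (not_le.2 hy), zero_mul, ENNReal.ofReal_zero]
      rw [setLIntegral_congr_fun_ae measurableSet_Iio hstep]
      simp
    rw [hzero, zero_add, Set.compl_Iio, ← restrict_Ioi_eq_restrict_Ici]
    refine setLIntegral_congr_fun measurableSet_Ioi (fun y hy => ?_)
    rw [if_pos (le_of_lt hy), hWT y]
  have hWint : IntegrableOn W (Set.Ioi (0:ℝ)) := by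
    rw [hWdef]
    apply integrable_finset_sum
    intro m _
    apply integrable_finset_sum
    intro k _
    exact (aux_integrable_pow_exp (k + nrr) hβ0).const_mul _
  have hcoefnn : ∀ m k : ℕ, 0 ≤ Real.exp (-L) * (Nat.choose m k : ℝ) * P_r ^ k * L ^ m /
      ((Nat.factorial m : ℝ) * ((Nat.factorial nrr : ℝ) * θ_rr ^ (nrr + 1))) := fun m k =>
    div_nonneg (mul_nonneg (mul_nonneg (mul_nonneg (Real.exp_nonneg _) (Nat.cast_nonneg _))
      (pow_nonneg hP_r.le _)) (pow_nonneg hL0 _)) (by positivity)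
  have hWnn : 0 ≤ᵐ[volume.restrict (Set.Ioi (0:ℝ))] W := by
    refine (ae_restrict_iff' measurableSet_Ioi).2 (ae_of_all _ fun y hy => ?_)
    simp only [hWdef]
    exact Finset.sum_nonneg fun m _ => Finset.sum_nonneg fun k _ => mul_nonneg (hcoefnn m k)
      (mul_nonneg (pow_nonneg (le_of_lt hy) _) (Real.exp_nonneg _))
  have hN7 : (∫⁻ y in Set.Ioi (0:ℝ), ENNReal.ofReal (W y) ∂volume)
      = ENNReal.ofReal (∫ y in Set.Ioi (0:ℝ), W y) :=
    (ofReal_integral_eq_lintegral_ofReal hWint hWnn).symm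
  have hIval : (∫ y in Set.Ioi (0:ℝ), W y)
      = ∑ m ∈ range m_sr, ∑ k ∈ range (m + 1),
          (Real.exp (-L) * (Nat.choose m k : ℝ) * P_r ^ k * L ^ m /
            ((Nat.factorial m : ℝ) * ((Nat.factorial nrr : ℝ) * θ_rr ^ (nrr + 1)))) *
          ((Nat.factorial (k + nrr) : ℝ) / β ^ (k + nrr + 1)) := by
    simp only [hWdef]
    rw [integral_finset_sum _ fun m _ => integrable_finset_sum _ fun k _ =>
      (aux_integrable_pow_exp (k + nrr) hβ0).const_mul _]
    refine Finset.sum_congr rfl fun m _ => ?_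
    rw [integral_finset_sum _ fun k _ => (aux_integrable_pow_exp (k + nrr) hβ0).const_mul _]
    refine Finset.sum_congr rfl fun k _ => ?_
    rw [integral_const_mul, aux_integral_pow_exp (k + nrr) hβ0]
  have hNval : μ {ω | ψ * (P_r * g_rr ω + 1) ≤ P_s * g_sr ω}
      = ENNReal.ofReal (∑ m ∈ range m_sr, ∑ k ∈ range (m + 1),
          (Real.exp (-L) * (Nat.choose m k : ℝ) * P_r ^ k * L ^ m /
            ((Nat.factorial m : ℝ) * ((Nat.factorial nrr : ℝ) * θ_rr ^ (nrr + 1)))) *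
          ((Nat.factorial (k + nrr) : ℝ) / β ^ (k + nrr + 1))) := by
    rw [hN1, hN2, hN3, hN4, hN6, hN7, hIval]
  have hSval0 : 0 ≤ ∑ m ∈ range m_sr, ∑ k ∈ range (m + 1),
      (Real.exp (-L) * (Nat.choose m k : ℝ) * P_r ^ k * L ^ m /
        ((Nat.factorial m : ℝ) * ((Nat.factorial nrr : ℝ) * θ_rr ^ (nrr + 1)))) *
      ((Nat.factorial (k + nrr) : ℝ) / β ^ (k + nrr + 1)) :=
    Finset.sum_nonneg fun m _ => Finset.sum_nonneg fun k _ => mul_nonneg (hcoefnn m k)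
      (div_nonneg (Nat.cast_nonneg _) (pow_nonneg hβ0.le _))
  have hEcompl : {ω | P_s * g_sr ω < ψ * (P_r * g_rr ω + 1)}
      = {ω | ψ * (P_r * g_rr ω + 1) ≤ P_s * g_sr ω}ᶜ := by
    ext ω; simp [not_le]
  have hμE : μ {ω | P_s * g_sr ω < ψ * (P_r * g_rr ω + 1)}
      = 1 - μ {ω | ψ * (P_r * g_rr ω + 1) ≤ P_s * g_sr ω} := by
    rw [hEcompl, measure_compl hNmeas (measure_ne_top μ _), measure_univ]
  have hmono := measure_mono_ae hsubset
  have hNle1 : μ {ω | ψ * (P_r * g_rr ω + 1) ≤ P_s * g_sr ω} ≤ 1 := prob_le_one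
  have htoReal : (μ {ω | P_s * g_sr ω < ψ * (P_r * g_rr ω + 1)}).toReal
      = 1 - ∑ m ∈ range m_sr, ∑ k ∈ range (m + 1),
          (Real.exp (-L) * (Nat.choose m k : ℝ) * P_r ^ k * L ^ m /
            ((Nat.factorial m : ℝ) * ((Nat.factorial nrr : ℝ) * θ_rr ^ (nrr + 1)))) *
          ((Nat.factorial (k + nrr) : ℝ) / β ^ (k + nrr + 1)) := by
    rw [hμE, ENNReal.toReal_sub_of_le hNle1 ENNReal.one_ne_top, ENNReal.toReal_one, hNval,
      ENNReal.toReal_ofReal hSval0]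
  have hfinal : (μ {ω | (P_s * g_sr ω + P_r * g_rr ω + 1) ^ 2 - (P_r * g_rr ω * C) ^ 2
          < (2 : ℝ) ^ (2 * r) * ((P_r * g_rr ω + 1) ^ 2 - (P_r * g_rr ω * C) ^ 2)}).toReal
      ≥ 1 - ∑ m ∈ range m_sr, ∑ k ∈ range (m + 1),
          (Real.exp (-L) * (Nat.choose m k : ℝ) * P_r ^ k * L ^ m /
            ((Nat.factorial m : ℝ) * ((Nat.factorial nrr : ℝ) * θ_rr ^ (nrr + 1)))) *
          ((Nat.factorial (k + nrr) : ℝ) / β ^ (k + nrr + 1)) := by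
    rw [← htoReal]
    exact ENNReal.toReal_mono (measure_ne_top μ _) hmono
  -- identify the two sums
  have hG1 : ∀ k : ℕ, Real.Gamma ((k : ℝ) + ((nrr + 1 : ℕ) : ℝ)) = (Nat.factorial (k + nrr) : ℝ) := by
    intro k
    have hcast : ((k : ℝ) + ((nrr + 1 : ℕ) : ℝ)) = ((k + nrr : ℕ) : ℝ) + 1 := by push_cast; ring
    rw [hcast, Real.Gamma_nat_eq_factorial]
  have hG2 : Real.Gamma (((nrr + 1 : ℕ)) : ℝ) = (Nat.factorial nrr : ℝ) := by
    have hcast : (((nrr + 1 : ℕ)) : ℝ) = (nrr : ℝ) + 1 := by push_cast; ring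
    rw [hcast, Real.Gamma_nat_eq_factorial]
  have hexpL : Real.exp (-ψ / (P_s * θ_sr)) = Real.exp (-L) := by rw [hLdef, neg_div]
  have hβeq : P_r * ψ / (P_s * θ_sr) + 1 / θ_rr = β := by rw [hβdef, hLdef]; ring
  have hRS : (Real.exp (-ψ / (P_s * θ_sr)) / (Real.Gamma (((nrr + 1 : ℕ)) : ℝ) * θ_rr ^ (nrr + 1))) *
        (∑ m ∈ range m_sr, ∑ k ∈ range (m + 1),
          (m.choose k : ℝ) * P_r ^ k * Real.Gamma ((k : ℝ) + ((nrr + 1 : ℕ) : ℝ)) * L ^ m /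
            ((Nat.factorial m : ℝ) * (P_r * ψ / (P_s * θ_sr) + 1 / θ_rr) ^ (k + (nrr + 1))))
      = ∑ m ∈ range m_sr, ∑ k ∈ range (m + 1),
          (Real.exp (-L) * (Nat.choose m k : ℝ) * P_r ^ k * L ^ m /
            ((Nat.factorial m : ℝ) * ((Nat.factorial nrr : ℝ) * θ_rr ^ (nrr + 1)))) *
          ((Nat.factorial (k + nrr) : ℝ) / β ^ (k + nrr + 1)) := by
    rw [hexpL, hG2, Finset.mul_sum]
    refine Finset.sum_congr rfl fun m _ => ?_
    rw [Finset.mul_sum]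
    refine Finset.sum_congr rfl fun k _ => ?_
    rw [hG1 k, hβeq]
    ring
  rw [ge_iff_le, ← hRS] at hfinal
  exact hfinal
end

section
/- Let g_rd and g_sd be independent exponential random variables with means π_rd > 0 and π_sd > 0, respectively. Fix P_s, P_r > 0, 0 ≤ C < 1, r > 0, set γ = 2^{2r} − 1 and Q = Ψ_γ(C)/(P_r·π_rd·(1 − C²)). Then P[(P_r·g_rd + P_s·g_sd + 1)² − (P_r·g_rd·C)² < 2^{2r}·(P_s·g_sd + 1)²] = 1 − e^{−Q} / (P_s·π_sd·Q + 1). -/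
open MeasureTheory ProbabilityTheory Real

/-- The exponential law with mean `mean`, given by its density `(1/mean) e^(-x/mean)` on `[0, ∞)`. -/
noncomputable def expLaw (mean : ℝ) : Measure ℝ :=
  volume.withDensity fun x =>
    ENNReal.ofReal (if 0 ≤ x then (1 / mean) * Real.exp (-x / mean) else 0)

set_option maxHeartbeats 1000000

lemma expLaw_eq (m : ℝ) : expLaw m = volume.withDensity (exponentialPDF (1/m)) := by
  unfold expLaw
  congr 1
  funext x
  rw [exponentialPDF_eq]
  congr 2
  rw [show -(1/m * x) = -x/m by ring]

lemma expLaw_Iio (m : ℝ) (hm : 0 < m) (c : ℝ) :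
    expLaw m (Set.Iio c) = ENNReal.ofReal (if 0 ≤ c then 1 - Real.exp (-(c/m)) else 0) := by
  rw [expLaw_eq, withDensity_apply _ measurableSet_Iio,
    setLIntegral_congr (Iio_ae_eq_Iic (a := c)),
    lintegral_exponentialPDF_eq_antiDeriv (by positivity) c]
  congr 2
  rw [show -(1/m * c) = -(c/m) by ring]

lemma expLaw_isProb (m : ℝ) (hm : 0 < m) : IsProbabilityMeasure (expLaw m) := by
  rw [expLaw_eq]; exact ⟨by rw [withDensity_apply _ MeasurableSet.univ, Measure.restrict_univ]; exact lintegral_exponentialPDF_eq_one (by positivity)⟩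

lemma expLaw_Iio_zero (m : ℝ) (hm : 0 < m) : expLaw m (Set.Iio 0) = 0 := by
  rw [expLaw_Iio m hm 0]; simp

theorem stmt_5
    {Ω : Type*} [MeasurableSpace Ω] (μ : Measure Ω) [IsProbabilityMeasure μ]
    (g_rd g_sd : Ω → ℝ) (hg_rd : Measurable g_rd) (hg_sd : Measurable g_sd)
    (hindep : IndepFun g_rd g_sd μ)
    (π_rd π_sd : ℝ) (hπ_rd : 0 < π_rd) (hπ_sd : 0 < π_sd)
    (hlaw_rd : μ.map g_rd = expLaw π_rd)
    (hlaw_sd : μ.map g_sd = expLaw π_sd)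
    (P_s P_r : ℝ) (hP_s : 0 < P_s) (hP_r : 0 < P_r)
    (C : ℝ) (hC : C ∈ Set.Ico (0 : ℝ) 1)
    (r : ℝ) (hr : 0 < r)
    (γ Q : ℝ) (hγ : γ = (2 : ℝ) ^ (2 * r) - 1)
    (hQ : Q = Psi γ C / (P_r * π_rd * (1 - C ^ 2))) :
    (μ {ω | (P_r * g_rd ω + P_s * g_sd ω + 1) ^ 2 - (P_r * g_rd ω * C) ^ 2
          < (2 : ℝ) ^ (2 * r) * (P_s * g_sd ω + 1) ^ 2}).toReal
      = 1 - Real.exp (-Q) / (P_s * π_sd * Q + 1) := by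
  obtain ⟨hC0, hC1⟩ := hC
  have h1C : 0 < 1 - C ^ 2 := by nlinarith
  have hγ0 : 0 < γ := by
    rw [hγ]; simp only [sub_pos]
    rw [show (1:ℝ) = (2:ℝ) ^ (0:ℝ) by simp]
    exact Real.rpow_lt_rpow_left_iff (by norm_num) |>.mpr (by positivity)
  set s : ℝ := Real.sqrt (1 + γ * (1 - C ^ 2)) with hs_def
  have hs0 : 0 ≤ s := Real.sqrt_nonneg _
  have hs2 : s ^ 2 = 1 + γ * (1 - C ^ 2) := Real.sq_sqrt (by nlinarith)
  have hs1 : 1 < s := by nlinarith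
  have hΨ : Psi γ C = s - 1 := rfl
  have hQ0 : 0 < Q := by
    rw [hQ, hΨ]; exact div_pos (by linarith) (by positivity)
  have hK : (2:ℝ) ^ (2*r) = γ + 1 := by rw [hγ]; ring
  haveI hprob_rd : IsProbabilityMeasure (expLaw π_rd) := expLaw_isProb _ hπ_rd
  haveI hprob_sd : IsProbabilityMeasure (expLaw π_sd) := expLaw_isProb _ hπ_sd
  have hS : MeasurableSet {p : ℝ × ℝ | (P_r * p.1 + P_s * p.2 + 1) ^ 2 - (P_r * p.1 * C) ^ 2
      < (2 : ℝ) ^ (2 * r) * (P_s * p.2 + 1) ^ 2} :=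
    measurableSet_lt (by fun_prop) (by fun_prop)
  have hmap : μ.map (fun ω => (g_rd ω, g_sd ω)) = (expLaw π_rd).prod (expLaw π_sd) := by
    rw [(indepFun_iff_map_prod_eq_prod_map_map hg_rd.aemeasurable hg_sd.aemeasurable).mp hindep,
      hlaw_rd, hlaw_sd]
  have hpre : {ω | (P_r * g_rd ω + P_s * g_sd ω + 1) ^ 2 - (P_r * g_rd ω * C) ^ 2
          < (2 : ℝ) ^ (2 * r) * (P_s * g_sd ω + 1) ^ 2}
      = (fun ω => (g_rd ω, g_sd ω)) ⁻¹' {p : ℝ × ℝ |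
        (P_r * p.1 + P_s * p.2 + 1) ^ 2 - (P_r * p.1 * C) ^ 2
          < (2 : ℝ) ^ (2 * r) * (P_s * p.2 + 1) ^ 2} := rfl
  rw [hpre, ← Measure.map_apply (hg_rd.prodMk hg_sd) hS, hmap,
    Measure.prod_apply_symm hS]
  -- key pointwise equivalence
  have key : ∀ y : ℝ, 0 ≤ y → ∀ x : ℝ, 0 ≤ x →
      ((P_r * x + P_s * y + 1) ^ 2 - (P_r * x * C) ^ 2
          < (2 : ℝ) ^ (2 * r) * (P_s * y + 1) ^ 2 ↔ x < Q * π_rd * (P_s * y + 1)) := by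
    intro y hy x hx
    rw [hK]
    have hb : 1 ≤ P_s * y + 1 := by nlinarith
    have hA : 0 < P_r * x * (1 - C ^ 2) + (P_s * y + 1) := by
      nlinarith [mul_nonneg (mul_nonneg hP_r.le hx) h1C.le]
    have hbs : 0 < (P_s * y + 1) * s :=
      mul_pos (by linarith) (by linarith)
    have hcP : (Q * π_rd * (P_s * y + 1)) * (P_r * (1 - C ^ 2))
        = (P_s * y + 1) * (s - 1) := by
      rw [hQ, hΨ]; field_simp
    have hs2b : ((P_s * y + 1) * s) ^ 2
        = (P_s * y + 1) ^ 2 + γ * (1 - C ^ 2) * (P_s * y + 1) ^ 2 := by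
      rw [mul_pow, hs2]; ring
    constructor
    · intro h
      have h2 : (P_r * x * (1 - C ^ 2) + (P_s * y + 1)) ^ 2 < ((P_s * y + 1) * s) ^ 2 := by
        linarith [mul_lt_mul_of_pos_right h h1C, hs2b]
      have h3 : P_r * x * (1 - C ^ 2) + (P_s * y + 1) < (P_s * y + 1) * s :=
        lt_of_pow_lt_pow_left₀ 2 (by positivity) h2
      have h4 : x * (P_r * (1 - C ^ 2)) < (Q * π_rd * (P_s * y + 1)) * (P_r * (1 - C ^ 2)) := by
        linarith [hcP, h3]
      exact lt_of_mul_lt_mul_right h4 (by positivity)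
    · intro h
      have h4 : P_r * x * (1 - C ^ 2) + (P_s * y + 1) < (P_s * y + 1) * s := by
        linarith [mul_lt_mul_of_pos_right h (show (0:ℝ) < P_r * (1 - C ^ 2) by positivity), hcP]
      have h5 : (P_r * x * (1 - C ^ 2) + (P_s * y + 1)) ^ 2 < ((P_s * y + 1) * s) ^ 2 :=
        by nlinarith [h4, hA]
      have h6 : P_r ^ 2 * x ^ 2 * (1 - C ^ 2) + 2 * (P_r * x) * (P_s * y + 1)
          - γ * (P_s * y + 1) ^ 2 < 0 := by
        by_contra h7
        push_neg at h7
        linarith [mul_le_mul_of_nonneg_left h7 h1C.le, h5, hs2b]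
      linarith [h6]
  -- slice measure computation, a.e. in y
  have hae : (fun y => expLaw π_rd ((fun x => (x, y)) ⁻¹' {p : ℝ × ℝ |
        (P_r * p.1 + P_s * p.2 + 1) ^ 2 - (P_r * p.1 * C) ^ 2
          < (2 : ℝ) ^ (2 * r) * (P_s * p.2 + 1) ^ 2}))
      =ᵐ[expLaw π_sd] (fun y => ENNReal.ofReal (1 - Real.exp (-(Q * (P_s * y + 1))))) := by
    refine Filter.eventuallyEq_of_mem (s := Set.Ici 0) (mem_ae_iff.mpr ?_) (fun y hy => ?_)
    · rw [Set.compl_Ici]; exact expLaw_Iio_zero _ hπ_sd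
    · have hy0 : (0:ℝ) ≤ y := hy
      have hc0 : 0 ≤ Q * π_rd * (P_s * y + 1) := by positivity
      have hsetae : ((fun x => (x, y)) ⁻¹' {p : ℝ × ℝ |
          (P_r * p.1 + P_s * p.2 + 1) ^ 2 - (P_r * p.1 * C) ^ 2
            < (2 : ℝ) ^ (2 * r) * (P_s * p.2 + 1) ^ 2})
          =ᵐ[expLaw π_rd] Set.Iio (Q * π_rd * (P_s * y + 1)) := by
        rw [MeasureTheory.ae_eq_set]
        constructor
        · refine measure_mono_null (fun x hx => ?_) (expLaw_Iio_zero _ hπ_rd)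
          by_contra hx0
          have hx0' : (0:ℝ) ≤ x := not_lt.mp hx0
          exact hx.2 ((key y hy0 x hx0').mp hx.1)
        · refine measure_mono_null (fun x hx => ?_) (expLaw_Iio_zero _ hπ_rd)
          by_contra hx0
          have hx0' : (0:ℝ) ≤ x := not_lt.mp hx0
          exact hx.2 ((key y hy0 x hx0').mpr hx.1)
      rw [measure_congr hsetae, expLaw_Iio _ hπ_rd, if_pos hc0]
      congr 2
      rw [show Q * π_rd * (P_s * y + 1) / π_rd = Q * (P_s * y + 1) by
        field_simp]
  rw [lintegral_congr_ae hae]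
  have hmeasG : Measurable fun y : ℝ => ENNReal.ofReal (1 - Real.exp (-(Q * (P_s * y + 1)))) :=
    ENNReal.measurable_ofReal.comp (by fun_prop)
  have hmeasP : ∀ a : ℝ, Measurable (exponentialPDF a) := fun a =>
    ENNReal.measurable_ofReal.comp (measurable_exponentialPDFReal a)
  set ρ : ℝ := 1 / π_sd + Q * P_s with hρ_def
  have hρ : 0 < ρ := by positivity
  set k : ℝ := Real.exp (-Q) * (1 / π_sd / ρ) with hk_def
  have hk0 : 0 ≤ k := by positivity
  have hk1 : k ≤ 1 := by
    have h1 : Real.exp (-Q) ≤ 1 := Real.exp_le_one_iff.mpr (by linarith)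
    have h2 : 1 / π_sd / ρ ≤ 1 :=
      (div_le_one hρ).mpr (by nlinarith [mul_pos hQ0 hP_s])
    rw [hk_def]
    exact mul_le_one₀ h1 (by positivity) h2
  have hpt : ∀ y : ℝ, exponentialPDF (1 / π_sd) y
      = exponentialPDF (1 / π_sd) y * ENNReal.ofReal (1 - Real.exp (-(Q * (P_s * y + 1))))
        + ENNReal.ofReal k * exponentialPDF ρ y := by
    intro y
    rcases lt_or_ge y 0 with hy | hy
    · rw [exponentialPDF_of_neg hy, exponentialPDF_of_neg hy]; simp
    · rw [exponentialPDF_of_nonneg hy, exponentialPDF_of_nonneg hy]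
      have hE1 : 0 ≤ 1 - Real.exp (-(Q * (P_s * y + 1))) := by
        have : Real.exp (-(Q * (P_s * y + 1))) ≤ 1 :=
          Real.exp_le_one_iff.mpr (by nlinarith [mul_nonneg (mul_nonneg hQ0.le hP_s.le) hy])
        linarith
      rw [← ENNReal.ofReal_mul (by positivity), ← ENNReal.ofReal_mul hk0,
        ← ENNReal.ofReal_add (mul_nonneg (by positivity) hE1) (by positivity)]
      congr 1
      have e1 : Real.exp (-(1 / π_sd * y)) * Real.exp (-(Q * (P_s * y + 1)))
          = Real.exp (-Q) * Real.exp (-(ρ * y)) := by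
        rw [← Real.exp_add, ← Real.exp_add]
        congr 1
        rw [hρ_def]; ring
      have e2 : k * ρ = Real.exp (-Q) * (1 / π_sd) := by
        rw [hk_def]; field_simp
      linear_combination (1 / π_sd) * e1 - Real.exp (-(ρ * y)) * e2
  have hI : (∫⁻ y, ENNReal.ofReal (1 - Real.exp (-(Q * (P_s * y + 1)))) ∂expLaw π_sd)
      + ENNReal.ofReal k = 1 := by
    rw [expLaw_eq, lintegral_withDensity_eq_lintegral_mul volume (hmeasP _) hmeasG]
    have h1 : ∫⁻ y, exponentialPDF (1 / π_sd) y ∂volume = 1 :=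
      lintegral_exponentialPDF_eq_one (by positivity)
    have h2 : ∫⁻ y, exponentialPDF ρ y ∂volume = 1 :=
      lintegral_exponentialPDF_eq_one hρ
    rw [lintegral_congr hpt, lintegral_add_left (show Measurable fun a => exponentialPDF (1 / π_sd) a * ENNReal.ofReal (1 - Real.exp (-(Q * (P_s * a + 1)))) from (hmeasP _).mul hmeasG),
      lintegral_const_mul _ (hmeasP ρ), h2, mul_one] at h1
    exact h1
  have hI' : (∫⁻ y, ENNReal.ofReal (1 - Real.exp (-(Q * (P_s * y + 1)))) ∂expLaw π_sd)
      = 1 - ENNReal.ofReal k := ENNReal.eq_sub_of_add_eq ENNReal.ofReal_ne_top hI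
  rw [hI', ENNReal.toReal_sub_of_le (ENNReal.ofReal_le_one.mpr hk1) ENNReal.one_ne_top,
    ENNReal.toReal_one, ENNReal.toReal_ofReal hk0]
  have hkval : k = Real.exp (-Q) / (P_s * π_sd * Q + 1) := by
    rw [hk_def, hρ_def]
    have h3 : 1 / π_sd / (1 / π_sd + Q * P_s) = 1 / (P_s * π_sd * Q + 1) := by
      rw [div_eq_div_iff (by positivity) (by positivity)]
      field_simp
      ring
    rw [h3, mul_one_div]
  rw [hkval]
end
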